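/- For the Rayleigh model f_θ(x) = (x/θ²) exp(-x²/(2θ²)) 1_{[0,∞)}(x) with θ > 0, the squared Hellinger distance is h²(f_θ, f_{θ'}) = (θ - θ')² / (θ² + θ'²). -/

import Mathlib

open MeasureTheory Real Set Filter

lemma key_integral {b : ℝ} (hb : 0 < b) :
    ∫ r in Ioi (0:ℝ), r * Real.exp (-b * r ^ 2) = (2 * b)⁻¹ := by
  have hderiv : ∀ x ∈ Ioi (0:ℝ), HasDerivAt (fun x => -(2 * b)⁻¹ * Real.exp (-b * x ^ 2))
      (x * Real.exp (-b * x ^ 2)) x := by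
    intro x _
    convert ((hasDerivAt_pow 2 x).const_mul (-b)).exp.const_mul (-(2 * b)⁻¹) using 1
    · rfl
    · rfl
    field_simp
    ring
  have hcont : ContinuousWithinAt (fun x => -(2 * b)⁻¹ * Real.exp (-b * x ^ 2)) (Ici 0) 0 :=
    (Continuous.continuousWithinAt (by continuity))
  have hint : IntegrableOn (fun x => x * Real.exp (-b * x ^ 2)) (Ioi 0) :=
    (integrable_mul_exp_neg_mul_sq hb).integrableOn
  have htend : Tendsto (fun x : ℝ => -(2 * b)⁻¹ * Real.exp (-b * x ^ 2)) atTop (nhds 0) := by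
    have h2 : Tendsto (fun x : ℝ => Real.exp (-b * x ^ 2)) atTop (nhds 0) := by
      have h1 : Tendsto (fun x : ℝ => -b * x ^ 2) atTop atBot := by
        apply Tendsto.const_mul_atTop_of_neg (neg_neg_iff_pos.mpr hb)
        exact tendsto_pow_atTop (by norm_num)
      exact Real.tendsto_exp_atBot.comp h1
    simpa using h2.const_mul (-(2 * b)⁻¹)
  rw [integral_Ioi_of_hasDerivAt_of_tendsto hcont hderiv hint htend]
  simp

noncomputable def hSq (f g : ℝ → ℝ) : ℝ :=
  (1/2) * ∫ x : ℝ, (Real.sqrt (f x) - Real.sqrt (g x))^2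

noncomputable def rayleigh (θ : ℝ) (x : ℝ) : ℝ :=
  if 0 ≤ x then (x / θ^2) * Real.exp (-(x^2) / (2 * θ^2)) else 0

theorem stmt1 (θ θ' : ℝ) (hθ : 0 < θ) (hθ' : 0 < θ') :
    hSq (rayleigh θ) (rayleigh θ') = (θ - θ')^2 / (θ^2 + θ'^2) := by
  have hθ0 : θ ≠ 0 := hθ.ne'
  have hθ'0 : θ' ≠ 0 := hθ'.ne'
  set A : ℝ := 1 / (2 * θ ^ 2) with hA
  set B : ℝ := 1 / (2 * θ' ^ 2) with hB
  set C : ℝ := (θ ^ 2 + θ' ^ 2) / (4 * θ ^ 2 * θ' ^ 2) with hC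
  have hApos : 0 < A := by positivity
  have hBpos : 0 < B := by positivity
  have hCpos : 0 < C := by positivity
  set F : ℝ → ℝ := fun x => (Real.sqrt (rayleigh θ x) - Real.sqrt (rayleigh θ' x)) ^ 2 with hF
  set G : ℝ → ℝ := fun x =>
      (1 / θ ^ 2) * (x * Real.exp (-A * x ^ 2)) + (1 / θ' ^ 2) * (x * Real.exp (-B * x ^ 2))
        - (2 / (θ * θ')) * (x * Real.exp (-C * x ^ 2)) with hG
  have hzero : ∀ x ∉ Ioi (0:ℝ), F x = 0 := by
    intro x hx
    simp only [mem_Ioi, not_lt] at hx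
    have h1 : ∀ t : ℝ, rayleigh t x = 0 := by
      intro t
      rw [rayleigh]
      split_ifs with h
      · have hx0 : x = 0 := le_antisymm hx h
        simp [hx0]
      · rfl
    simp [hF, h1]
  have hstep : ∫ x : ℝ, F x = ∫ x in Ioi (0:ℝ), F x :=
    (setIntegral_eq_integral_of_forall_compl_eq_zero hzero).symm
  have hsqrt : ∀ x ∈ Ioi (0:ℝ), ∀ t : ℝ, 0 < t →
      Real.sqrt (rayleigh t x) = Real.sqrt x / t * Real.exp (-(x^2) / (2 * t^2) / 2) := by
    intro x hx t ht
    have hx0 : (0:ℝ) ≤ x := (mem_Ioi.mp hx).le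
    rw [rayleigh, if_pos hx0, Real.sqrt_mul (by positivity), Real.exp_half,
      Real.sqrt_div hx0, Real.sqrt_sq ht.le]
  have hFG : ∀ x ∈ Ioi (0:ℝ), F x = G x := by
    intro x hx
    have hx0 : (0:ℝ) < x := mem_Ioi.mp hx
    simp only [hF, hG]
    rw [hsqrt x hx θ hθ, hsqrt x hx θ' hθ']
    have key : ∀ s e1 e2 : ℝ,
        (s / θ * e1 - s / θ' * e2) ^ 2 =
        (1 / θ ^ 2) * (s ^ 2 * (e1 * e1)) + (1 / θ' ^ 2) * (s ^ 2 * (e2 * e2))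
          - (2 / (θ * θ')) * (s ^ 2 * (e1 * e2)) := by
      intro s e1 e2; field_simp; ring
    rw [key, Real.sq_sqrt hx0.le, ← Real.exp_add, ← Real.exp_add, ← Real.exp_add]
    rw [show -(x^2) / (2 * θ^2) / 2 + -(x^2) / (2 * θ^2) / 2 = -A * x ^ 2 by rw [hA]; field_simp; ring,
      show -(x^2) / (2 * θ'^2) / 2 + -(x^2) / (2 * θ'^2) / 2 = -B * x ^ 2 by rw [hB]; field_simp; ring,
      show -(x^2) / (2 * θ^2) / 2 + -(x^2) / (2 * θ'^2) / 2 = -C * x ^ 2 by rw [hC]; field_simp; ring]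
  have hIA : IntegrableOn (fun x : ℝ => x * Real.exp (-A * x ^ 2)) (Ioi 0) :=
    (integrable_mul_exp_neg_mul_sq hApos).integrableOn
  have hIB : IntegrableOn (fun x : ℝ => x * Real.exp (-B * x ^ 2)) (Ioi 0) :=
    (integrable_mul_exp_neg_mul_sq hBpos).integrableOn
  have hIC : IntegrableOn (fun x : ℝ => x * Real.exp (-C * x ^ 2)) (Ioi 0) :=
    (integrable_mul_exp_neg_mul_sq hCpos).integrableOn
  have hGint : ∫ x in Ioi (0:ℝ), G x =
      (1 / θ ^ 2) * (2 * A)⁻¹ + (1 / θ' ^ 2) * (2 * B)⁻¹ - (2 / (θ * θ')) * (2 * C)⁻¹ := by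
    have i1 : IntegrableOn (fun x : ℝ => (1 / θ ^ 2) * (x * Real.exp (-A * x ^ 2))
        + (1 / θ' ^ 2) * (x * Real.exp (-B * x ^ 2))) (Ioi 0) :=
      (hIA.const_mul _).add (hIB.const_mul _)
    have i2 : IntegrableOn (fun x : ℝ => (2 / (θ * θ')) * (x * Real.exp (-C * x ^ 2))) (Ioi 0) :=
      hIC.const_mul _
    simp only [hG]
    rw [integral_sub i1 i2,
      integral_add (hIA.const_mul _) (hIB.const_mul _),
      integral_const_mul, integral_const_mul, integral_const_mul,
      key_integral hApos, key_integral hBpos, key_integral hCpos]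
  have hFint : ∫ x in Ioi (0:ℝ), F x = ∫ x in Ioi (0:ℝ), G x := by
    apply setIntegral_congr_fun measurableSet_Ioi
    intro x hx; exact hFG x hx
  have hθθ' : θ ^ 2 + θ' ^ 2 ≠ 0 := by positivity
  rw [hSq, show (fun x => (Real.sqrt (rayleigh θ x) - Real.sqrt (rayleigh θ' x))^2) = F from rfl]
  rw [hstep, hFint, hGint, hA, hB, hC]
  field_simp
  ring
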